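/- Let Ω be a uniform domain with Whitney covering W, 0 < σ < 1, 1 ≤ p = q < ∞, and f ∈ L¹_loc(Ω). Then Σ_{Q∈W} Σ_{L∈W} ∫_L |f(y) − f_L|^p / D(Q,L)^{σp+d} dy · ℓ(Q)^d ≤ C ∫_Ω ∫_Ω |f(x)−f(y)|^p / |x−y|^{σp+d} dy dx, where f_L is the mean of f over L and D is the long distance. -/

import Mathlib

open MeasureTheory ENNReal

/-- An axis-parallel cube in `ℝ^d`, identified with the closed ball of radius `side/2`
around its center in the sup metric on `Fin d → ℝ`. -/
structure Cube (d : ℕ) where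
  center : Fin d → ℝ
  side : ℝ
  side_pos : 0 < side

/-- The set of points of a cube. -/
def Cube.toSet {d : ℕ} (Q : Cube d) : Set (Fin d → ℝ) :=
  Metric.closedBall Q.center (Q.side / 2)

/-- Distance between two sets. -/
noncomputable def setDist {d : ℕ} (A B : Set (Fin d → ℝ)) : ℝ :=
  sInf (Set.image2 dist A B)

/-- The long distance `D(Q,S) = ℓ(Q) + ℓ(S) + dist(Q,S)` between two cubes. -/
noncomputable def longDist {d : ℕ} (Q S : Cube d) : ℝ :=
  Q.side + S.side + setDist Q.toSet S.toSet

/-- A Whitney covering of `Ω`: a family of essentially disjoint (dyadic-type) cubes whose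
union is `Ω`, with side-lengths comparable to the distance to `∂Ω`, and finite
superposition of the dilated cubes `50Q`. -/
structure WhitneyCovering (d : ℕ) (Ω : Set (Fin d → ℝ)) where
  cubes : Set (Cube d)
  covers : (⋃ Q ∈ cubes, Q.toSet) = Ω
  essDisjoint : ∀ Q ∈ cubes, ∀ S ∈ cubes, Q ≠ S →
    interior Q.toSet ∩ interior S.toSet = ∅
  CW : ℝ
  one_le_CW : 1 ≤ CW
  dist_lb : ∀ Q ∈ cubes, CW * Q.side ≤ setDist Q.toSet (frontier Ω)
  dist_ub : ∀ Q ∈ cubes, setDist Q.toSet (frontier Ω) ≤ 4 * CW * Q.side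
  finiteOverlap : ∃ N : ℕ, ∀ x : Fin d → ℝ,
    {Q ∈ cubes | x ∈ Metric.closedBall Q.center (25 * Q.side)}.Finite ∧
    {Q ∈ cubes | x ∈ Metric.closedBall Q.center (25 * Q.side)}.ncard ≤ N

/-- `S ∈ SH_ρ(P)` : the cube `S` of the covering lies in the `ρ`-shadow of `P`, i.e.
`S ⊆ B(x_P, ρ ℓ(P))`. -/
def memShadow {d : ℕ} {Ω : Set (Fin d → ℝ)} (W : WhitneyCovering d Ω) (ρ : ℝ)
    (S P : Cube d) : Prop :=
  S ∈ W.cubes ∧ P ∈ W.cubes ∧ S.toSet ⊆ Metric.closedBall P.center (ρ * P.side)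

/-- An `ε`-admissible chain of Whitney cubes joining `Q` to `S`. -/
structure AdmissibleChain {d : ℕ} {Ω : Set (Fin d → ℝ)} (W : WhitneyCovering d Ω)
    (ε : ℝ) (Q S : Cube d) where
  M : ℕ
  M_pos : 0 < M
  c : Fin M → Cube d
  mem : ∀ j, c j ∈ W.cubes
  first : c ⟨0, M_pos⟩ = Q
  last : c ⟨M - 1, Nat.sub_lt M_pos Nat.one_pos⟩ = S
  neighbors : ∀ (j : ℕ) (h : j + 1 < M),
    ((c ⟨j, Nat.lt_of_succ_lt h⟩).toSet ∩ (c ⟨j + 1, h⟩).toSet).Nonempty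
  length_le : ∑ j, (c j).side ≤ ε⁻¹ * longDist Q S
  j₀ : Fin M
  growth₁ : ∀ j : Fin M, j ≤ j₀ → ε * longDist Q (c j) ≤ (c j).side
  growth₂ : ∀ j : Fin M, j₀ ≤ j → ε * longDist (c j) S ≤ (c j).side

/-- `Ω` (with Whitney covering `W`) is an `ε`-uniform domain: any two Whitney cubes are
joined by an `ε`-admissible chain. -/
def IsUniformDomain {d : ℕ} {Ω : Set (Fin d → ℝ)} (W : WhitneyCovering d Ω) (ε : ℝ) : Prop :=
  ∀ Q ∈ W.cubes, ∀ S ∈ W.cubes, Nonempty (AdmissibleChain W ε Q S)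

/-- The non-centered Hardy–Littlewood maximal function, taken over cubes
(closed balls in the sup metric on `Fin d → ℝ`) containing `x`. -/
noncomputable def maximal (d : ℕ) (g : (Fin d → ℝ) → ℝ≥0∞) (x : Fin d → ℝ) : ℝ≥0∞ :=
  ⨆ (c : Fin d → ℝ) (r : ℝ) (_ : 0 < r) (_ : x ∈ Metric.closedBall c r),
    (∫⁻ y in Metric.closedBall c r, g y) / volume (Metric.closedBall c r)

namespace Stmt12

variable {d : ℕ}

lemma cube_radius_pos (Q : Cube d) : 0 < Q.side / 2 := by
  have := Q.side_pos; linarith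

lemma cube_nonempty (Q : Cube d) : Q.toSet.Nonempty :=
  ⟨Q.center, Metric.mem_closedBall_self (cube_radius_pos Q).le⟩

lemma setDist_nonneg (A B : Set (Fin d → ℝ)) : 0 ≤ setDist A B := by
  apply Real.sInf_nonneg
  rintro x ⟨a, -, b, -, rfl⟩
  exact dist_nonneg

lemma longDist_pos (Q L : Cube d) : 0 < longDist Q L := by
  have h1 := Q.side_pos; have h2 := L.side_pos
  have h3 := setDist_nonneg Q.toSet L.toSet
  unfold longDist; linarith

lemma dist_le_side {Q : Cube d} {x y : Fin d → ℝ} (hx : x ∈ Q.toSet) (hy : y ∈ Q.toSet) :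
    dist x y ≤ Q.side := by
  have h1 : dist x Q.center ≤ Q.side / 2 := Metric.mem_closedBall.1 hx
  have h2 : dist y Q.center ≤ Q.side / 2 := Metric.mem_closedBall.1 hy
  calc dist x y ≤ dist x Q.center + dist y Q.center := dist_triangle_right _ _ _
  _ ≤ Q.side := by linarith

lemma dist_center_le {Q L : Cube d} {x : Fin d → ℝ} (hx : x ∈ Q.toSet) :
    L.side + dist x L.center ≤ 2 * longDist Q L := by
  have key : dist x L.center ≤ Q.side + setDist Q.toSet L.toSet + L.side / 2 := by
    refine le_of_forall_pos_le_add fun ε hε => ?_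
    obtain ⟨r, hr, hlt⟩ := Real.lt_sInf_add_pos
      (s := Set.image2 dist Q.toSet L.toSet)
      ((cube_nonempty Q).image2 (cube_nonempty L)) hε
    obtain ⟨a, ha, b, hb, rfl⟩ := hr
    have h1 : dist x L.center ≤ dist x a + dist a b + dist b L.center := by
      have h2 := dist_triangle x b L.center
      have h3 := dist_triangle x a b
      linarith
    have h2 : dist x a ≤ Q.side := dist_le_side hx ha
    have h3 : dist b L.center ≤ L.side / 2 := Metric.mem_closedBall.1 hb
    unfold setDist
    linarith
  have h4 := setDist_nonneg Q.toSet L.toSet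
  have h5 := Q.side_pos; have h6 := L.side_pos
  unfold longDist; linarith

lemma cube_vol (Q : Cube d) :
    volume Q.toSet = ENNReal.ofReal (Q.side ^ (d : ℝ)) := by
  rw [Cube.toSet, Real.volume_pi_closedBall _ (cube_radius_pos Q).le]
  congr 1
  have h2 : 2 * (Q.side / 2) = Q.side := by ring
  rw [Fintype.card_fin, h2]
  exact (Real.rpow_natCast Q.side d).symm

lemma cube_ball_vol (Q : Cube d) :
    volume (Metric.ball Q.center (Q.side / 2)) = volume Q.toSet := by
  rw [Cube.toSet, Real.volume_pi_closedBall _ (cube_radius_pos Q).le,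
    Real.volume_pi_ball _ (cube_radius_pos Q)]

lemma cube_ae_ball (Q : Cube d) :
    Q.toSet =ᵐ[volume] Metric.ball Q.center (Q.side / 2) := by
  have hsub : Metric.ball Q.center (Q.side / 2) ⊆ Q.toSet := Metric.ball_subset_closedBall
  rw [MeasureTheory.ae_eq_set]
  constructor
  · rw [measure_diff hsub measurableSet_ball.nullMeasurableSet
      (by rw [cube_ball_vol, cube_vol]; exact ENNReal.ofReal_ne_top),
      cube_ball_vol, tsub_self]
  · rw [Set.diff_eq_empty.2 hsub, measure_empty]

lemma cube_subset_omega {Ω : Set (Fin d → ℝ)} (W : WhitneyCovering d Ω) {Q : Cube d}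
    (hQ : Q ∈ W.cubes) : Q.toSet ⊆ Ω := by
  intro x hx
  rw [← W.covers]
  exact Set.mem_biUnion hQ hx

lemma tsum_setLIntegral_le {Ω : Set (Fin d → ℝ)} (W : WhitneyCovering d Ω)
    (g : (Fin d → ℝ) → ℝ≥0∞) {U : Set (Fin d → ℝ)} (hΩU : Ω ⊆ U) :
    ∑' Q : {Q : Cube d // Q ∈ W.cubes}, ∫⁻ x in (Q : Cube d).toSet, g x ∂volume ≤
      ∫⁻ x in U, g x ∂volume := by
  rw [ENNReal.tsum_eq_iSup_sum]
  refine iSup_le fun F => ?_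
  calc ∑ Q ∈ F, ∫⁻ x in (Q : Cube d).toSet, g x ∂volume
      = ∑ Q ∈ F, ∫⁻ x in Metric.ball (Q : Cube d).center ((Q : Cube d).side / 2), g x ∂volume :=
        Finset.sum_congr rfl fun Q _ => setLIntegral_congr (cube_ae_ball _)
    _ = ∫⁻ x in ⋃ Q ∈ F, Metric.ball (Q : Cube d).center ((Q : Cube d).side / 2), g x ∂volume := by
        refine (lintegral_biUnion_finset ?_ (fun _ _ => measurableSet_ball) g).symm
        intro Q hQ S hS hQS
        have hdis := W.essDisjoint _ Q.2 _ S.2 (fun h => hQS (Subtype.ext h))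
        refine Set.disjoint_left.2 fun x hxQ hxS => ?_
        have hmem : x ∈ interior (Q : Cube d).toSet ∩ interior (S : Cube d).toSet :=
          ⟨Metric.ball_subset_interior_closedBall hxQ,
            Metric.ball_subset_interior_closedBall hxS⟩
        rw [hdis] at hmem
        exact hmem
    _ ≤ ∫⁻ x in U, g x ∂volume := by
        refine lintegral_mono_set ?_
        refine Set.iUnion₂_subset fun Q _ => ?_
        exact (Metric.ball_subset_closedBall.trans (cube_subset_omega W Q.2)).trans hΩU

noncomputable def Kc (d : ℕ) (s : ℝ) : ℝ≥0∞ :=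
  ∫⁻ u : Fin d → ℝ, ENNReal.ofReal ((1 + ‖u‖) ^ (-s))

lemma Kc_ne_top {s : ℝ} (hs : (d : ℝ) < s) : Kc d s ≠ ⊤ := by
  have h : Integrable (fun u : Fin d → ℝ => (1 + ‖u‖) ^ (-s)) volume := by
    apply integrable_one_add_norm
    rwa [Module.finrank_fin_fun]
  exact h.lintegral_lt_top.ne

lemma g_meas {a s : ℝ} (ha : 0 < a) :
    Measurable fun x : Fin d → ℝ => ENNReal.ofReal ((a + ‖x‖) ^ (-s)) := by
  have hc : Continuous fun x : Fin d → ℝ => (a + ‖x‖) ^ (-s) := by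
    apply Continuous.rpow_const (by continuity)
    intro x
    left
    have : (0:ℝ) < a + ‖x‖ := by positivity
    exact this.ne'
  exact ENNReal.measurable_ofReal.comp hc.measurable

lemma lintegral_g {s : ℝ} {a : ℝ} (ha : 0 < a) (c : Fin d → ℝ) :
    ∫⁻ x : Fin d → ℝ, ENNReal.ofReal ((a + dist x c) ^ (-s)) =
      ENNReal.ofReal (a ^ ((d : ℝ) - s)) * Kc d s := by
  have hFm := g_meas (d := d) (s := s) ha
  have h1 : ∫⁻ x : Fin d → ℝ, ENNReal.ofReal ((a + dist x c) ^ (-s)) =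
      ∫⁻ x : Fin d → ℝ, ENNReal.ofReal ((a + ‖x‖) ^ (-s)) := by
    simp_rw [dist_eq_norm]
    exact lintegral_sub_right_eq_self (fun x => ENNReal.ofReal ((a + ‖x‖) ^ (-s))) c
  rw [h1]
  have hmap := Measure.map_addHaar_smul (μ := (volume : Measure (Fin d → ℝ))) ha.ne'
  simp only [Module.finrank_fin_fun] at hmap
  have h2 : (∫⁻ x : Fin d → ℝ, ENNReal.ofReal ((a + ‖(a • x : Fin d → ℝ)‖) ^ (-s))) =
      ENNReal.ofReal |(a ^ d)⁻¹| *
        ∫⁻ x : Fin d → ℝ, ENNReal.ofReal ((a + ‖x‖) ^ (-s)) := by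
    rw [← lintegral_map hFm (measurable_const_smul a), hmap, lintegral_smul_measure, smul_eq_mul]
  have h3 : ∀ x : Fin d → ℝ, ENNReal.ofReal ((a + ‖(a • x : Fin d → ℝ)‖) ^ (-s)) =
      ENNReal.ofReal (a ^ (-s)) * ENNReal.ofReal ((1 + ‖x‖) ^ (-s)) := by
    intro x
    have hnorm : ‖(a • x : Fin d → ℝ)‖ = a * ‖x‖ := by
      rw [norm_smul, Real.norm_eq_abs, abs_of_pos ha]
    have hfac : a + a * ‖x‖ = a * (1 + ‖x‖) := by ring
    rw [hnorm, hfac, Real.mul_rpow ha.le (by positivity),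
      ENNReal.ofReal_mul (Real.rpow_nonneg ha.le _)]
  have hpow : (0:ℝ) < a ^ d := pow_pos ha d
  have key : ENNReal.ofReal (a ^ (-s)) * Kc d s =
      (ENNReal.ofReal (a ^ d))⁻¹ *
        ∫⁻ x : Fin d → ℝ, ENNReal.ofReal ((a + ‖x‖) ^ (-s)) := by
    rw [← ENNReal.ofReal_inv_of_pos hpow, ← abs_of_pos (inv_pos.2 hpow), ← h2]
    simp_rw [h3]
    rw [lintegral_const_mul' _ _ ENNReal.ofReal_ne_top]
    rfl
  have hane0 : ENNReal.ofReal (a ^ d) ≠ 0 := (ENNReal.ofReal_pos.2 hpow).ne'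
  calc (∫⁻ x : Fin d → ℝ, ENNReal.ofReal ((a + ‖x‖) ^ (-s)))
      = (ENNReal.ofReal (a ^ d) * (ENNReal.ofReal (a ^ d))⁻¹) *
          ∫⁻ x : Fin d → ℝ, ENNReal.ofReal ((a + ‖x‖) ^ (-s)) := by
        rw [ENNReal.mul_inv_cancel hane0 ENNReal.ofReal_ne_top, one_mul]
    _ = ENNReal.ofReal (a ^ d) * (ENNReal.ofReal (a ^ (-s)) * Kc d s) := by
        rw [mul_assoc, ← key]
    _ = ENNReal.ofReal (a ^ ((d : ℝ) - s)) * Kc d s := by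
        rw [← mul_assoc, ← ENNReal.ofReal_mul (by positivity)]
        congr 2
        rw [← Real.rpow_natCast a d, ← Real.rpow_add ha, sub_eq_add_neg]

lemma avg_pow_le {α : Type*} [MeasurableSpace α] (μ : Measure α) {G : α → ℝ≥0∞}
    (hG : AEMeasurable G μ) {p : ℝ} (hp : 1 ≤ p) :
    (∫⁻ x, G x ∂μ) ^ p ≤ (∫⁻ x, G x ^ p ∂μ) * μ Set.univ ^ (p - 1) := by
  rcases eq_or_lt_of_le hp with hp1 | hp1
  · rw [← hp1]
    simp
  · have hpq : p.HolderConjugate (Real.conjExponent p) := Real.HolderConjugate.conjExponent hp1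
    have hH := ENNReal.lintegral_mul_le_Lp_mul_Lq μ hpq hG
      (aemeasurable_const (b := (1 : ℝ≥0∞)))
    simp only [Pi.mul_apply, mul_one, ENNReal.one_rpow, lintegral_const, one_mul] at hH
    have hp0 : (0:ℝ) < p := lt_trans zero_lt_one hp1
    have h2 := ENNReal.rpow_le_rpow hH hp0.le
    rw [ENNReal.mul_rpow_of_nonneg _ _ hp0.le, ← ENNReal.rpow_mul, ← ENNReal.rpow_mul,
      one_div, inv_mul_cancel₀ hp0.ne', ENNReal.rpow_one] at h2
    have hq : 1 / Real.conjExponent p * p = p - 1 := by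
      rw [Real.conjExponent]
      have h1 : p - 1 ≠ 0 := sub_ne_zero.2 hp1.ne'
      field_simp
    rwa [hq] at h2

lemma local_est {L : Cube d} {f : (Fin d → ℝ) → ℝ} (hf : IntegrableOn f L.toSet volume)
    {σ p : ℝ} (hσ0 : 0 < σ) (hp : 1 ≤ p) :
    (∫⁻ y in L.toSet, (‖f y - ⨍ z in L.toSet, f z‖₊ : ℝ≥0∞) ^ p ∂volume) ≤
      ENNReal.ofReal (L.side ^ (σ * p)) *
        ∫⁻ y in L.toSet, ∫⁻ z in L.toSet,
          (‖f y - f z‖₊ : ℝ≥0∞) ^ p / edist y z ^ (σ * p + d) ∂volume ∂volume := by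
  set s : ℝ := σ * p + d with hs_def
  have hp0 : (0:ℝ) < p := lt_of_lt_of_le zero_lt_one hp
  have hσp : 0 < σ * p := mul_pos hσ0 hp0
  have hside := L.side_pos
  have hs0 : 0 < s := by
    have : (0:ℝ) ≤ d := Nat.cast_nonneg d
    rw [hs_def]; linarith
  set m : ℝ≥0∞ := volume L.toSet with hm_def
  have hmvol : m = ENNReal.ofReal (L.side ^ (d:ℝ)) := cube_vol L
  have hm0 : m ≠ 0 := by
    rw [hmvol]
    exact (ENNReal.ofReal_pos.2 (Real.rpow_pos_of_pos hside _)).ne'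
  have hmtop : m ≠ ⊤ := by rw [hmvol]; exact ENNReal.ofReal_ne_top
  have hstep : ∀ y : Fin d → ℝ,
      (‖f y - ⨍ z in L.toSet, f z‖₊ : ℝ≥0∞) ^ p ≤
        m⁻¹ * ∫⁻ z in L.toSet, (‖f y - f z‖₊ : ℝ≥0∞) ^ p ∂volume := by
    intro y
    have hconst : IntegrableOn (fun _ => f y) L.toSet volume :=
      integrableOn_const hmtop
    have hsubint : IntegrableOn (fun z => f y - f z) L.toSet volume := hconst.sub hf
    have hmR : (0:ℝ) < m.toReal := ENNReal.toReal_pos hm0 hmtop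
    have hA : ‖f y - ⨍ z in L.toSet, f z‖ ≤
        m.toReal⁻¹ * ∫ z in L.toSet, ‖f y - f z‖ ∂volume := by
      have havg : (⨍ z in L.toSet, f z) = m.toReal⁻¹ * ∫ z in L.toSet, f z ∂volume := by
        rw [MeasureTheory.setAverage_eq, smul_eq_mul, hm_def]
        rfl
      have hrw : f y - ⨍ z in L.toSet, f z =
          m.toReal⁻¹ * ∫ z in L.toSet, (f y - f z) ∂volume := by
        rw [integral_sub hconst hf, setIntegral_const, smul_eq_mul, havg, measureReal_def, ← hm_def]
        field_simp
      rw [hrw, norm_mul, Real.norm_eq_abs (m.toReal⁻¹), abs_of_pos (inv_pos.2 hmR)]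
      exact mul_le_mul_of_nonneg_left (norm_integral_le_integral_norm _) (inv_pos.2 hmR).le
    have hB : (‖f y - ⨍ z in L.toSet, f z‖₊ : ℝ≥0∞) ≤
        m⁻¹ * ∫⁻ z in L.toSet, (‖f y - f z‖₊ : ℝ≥0∞) ∂volume := by
      rw [← enorm_eq_nnnorm, ← ofReal_norm]
      refine le_trans (ENNReal.ofReal_le_ofReal hA) ?_
      rw [ENNReal.ofReal_mul (inv_pos.2 hmR).le,
        MeasureTheory.ofReal_integral_eq_lintegral_ofReal hsubint.norm
          (Filter.Eventually.of_forall fun z => norm_nonneg _),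
        ENNReal.ofReal_inv_of_pos hmR, ENNReal.ofReal_toReal hmtop]
      refine le_of_eq ?_
      congr 1
      exact lintegral_congr fun z => ofReal_norm _
    have hmeas : AEMeasurable (fun z => (‖f y - f z‖₊ : ℝ≥0∞)) (volume.restrict L.toSet) :=
      (aestronglyMeasurable_const.sub hf.aestronglyMeasurable).enorm
    calc (‖f y - ⨍ z in L.toSet, f z‖₊ : ℝ≥0∞) ^ p
        ≤ (m⁻¹ * ∫⁻ z in L.toSet, (‖f y - f z‖₊ : ℝ≥0∞) ∂volume) ^ p :=
          ENNReal.rpow_le_rpow hB hp0.le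
      _ = m⁻¹ ^ p * (∫⁻ z in L.toSet, (‖f y - f z‖₊ : ℝ≥0∞) ∂volume) ^ p :=
          ENNReal.mul_rpow_of_nonneg _ _ hp0.le
      _ ≤ m⁻¹ ^ p * ((∫⁻ z in L.toSet, (‖f y - f z‖₊ : ℝ≥0∞) ^ p ∂volume) *
            ((volume.restrict L.toSet) Set.univ) ^ (p - 1)) :=
          mul_le_mul_right (avg_pow_le _ hmeas hp) _
      _ = m⁻¹ * ∫⁻ z in L.toSet, (‖f y - f z‖₊ : ℝ≥0∞) ^ p ∂volume := by
          rw [Measure.restrict_apply_univ, ← hm_def, ENNReal.inv_rpow, ← ENNReal.rpow_neg]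
          have harith : m ^ (-p) * m ^ (p - 1) = m⁻¹ := by
            rw [← ENNReal.rpow_add _ _ hm0 hmtop]
            have hexp : -p + (p - 1) = -1 := by ring
            rw [hexp, ENNReal.rpow_neg_one]
          calc m ^ (-p) * ((∫⁻ z in L.toSet, (‖f y - f z‖₊ : ℝ≥0∞) ^ p ∂volume) * m ^ (p - 1))
              = m ^ (-p) * m ^ (p - 1) * ∫⁻ z in L.toSet, (‖f y - f z‖₊ : ℝ≥0∞) ^ p ∂volume := by
                ring
            _ = m⁻¹ * ∫⁻ z in L.toSet, (‖f y - f z‖₊ : ℝ≥0∞) ^ p ∂volume := by rw [harith]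
  have hC : (∫⁻ y in L.toSet, (‖f y - ⨍ z in L.toSet, f z‖₊ : ℝ≥0∞) ^ p ∂volume) ≤
      m⁻¹ * ∫⁻ y in L.toSet, ∫⁻ z in L.toSet, (‖f y - f z‖₊ : ℝ≥0∞) ^ p ∂volume ∂volume := by
    rw [← lintegral_const_mul' _ _ (ENNReal.inv_ne_top.2 hm0)]
    exact lintegral_mono hstep
  have hD : ∀ y ∈ L.toSet, (∫⁻ z in L.toSet, (‖f y - f z‖₊ : ℝ≥0∞) ^ p ∂volume) ≤
      ENNReal.ofReal (L.side ^ s) *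
        ∫⁻ z in L.toSet, (‖f y - f z‖₊ : ℝ≥0∞) ^ p / edist y z ^ s ∂volume := by
    intro y hy
    rw [← lintegral_const_mul' _ _ ENNReal.ofReal_ne_top]
    refine lintegral_mono_ae ?_
    have hLmeas : MeasurableSet L.toSet := measurableSet_closedBall
    filter_upwards [ae_restrict_mem hLmeas] with z hz
    have hedist : edist y z ^ s ≤ ENNReal.ofReal (L.side ^ s) := by
      have h1 : edist y z ≤ ENNReal.ofReal L.side := by
        rw [edist_dist]
        exact ENNReal.ofReal_le_ofReal (dist_le_side hy hz)
      calc edist y z ^ s ≤ (ENNReal.ofReal L.side) ^ s := ENNReal.rpow_le_rpow h1 hs0.le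
        _ = ENNReal.ofReal (L.side ^ s) := ENNReal.ofReal_rpow_of_pos hside
    rcases eq_or_ne (edist y z ^ s) 0 with he | he
    · have h0 : edist y z = 0 := by
        by_contra hne
        exact (ENNReal.rpow_pos (pos_iff_ne_zero.2 hne) (edist_ne_top y z)).ne' he
      have hyz : y = z := edist_eq_zero.1 h0
      have hzero : (‖f y - f z‖₊ : ℝ≥0∞) ^ p = 0 := by
        rw [hyz]
        simp [ENNReal.zero_rpow_of_pos hp0]
      rw [hzero]
      exact zero_le
    · have hetop : edist y z ^ s ≠ ⊤ := ne_top_of_le_ne_top ENNReal.ofReal_ne_top hedist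
      calc (‖f y - f z‖₊ : ℝ≥0∞) ^ p
          = (‖f y - f z‖₊ : ℝ≥0∞) ^ p / edist y z ^ s * edist y z ^ s :=
            (ENNReal.div_mul_cancel he hetop).symm
        _ ≤ (‖f y - f z‖₊ : ℝ≥0∞) ^ p / edist y z ^ s * ENNReal.ofReal (L.side ^ s) :=
            mul_le_mul_right hedist _
        _ = ENNReal.ofReal (L.side ^ s) * ((‖f y - f z‖₊ : ℝ≥0∞) ^ p / edist y z ^ s) :=
            mul_comm _ _
  have hcancel : m⁻¹ * ENNReal.ofReal (L.side ^ s) = ENNReal.ofReal (L.side ^ (σ * p)) := by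
    rw [hmvol, hs_def, Real.rpow_add hside,
      ENNReal.ofReal_mul (Real.rpow_nonneg hside.le _)]
    rw [mul_comm (ENNReal.ofReal (L.side ^ (σ * p))) _, ← mul_assoc,
      ENNReal.inv_mul_cancel
        ((ENNReal.ofReal_pos.2 (Real.rpow_pos_of_pos hside _)).ne') ENNReal.ofReal_ne_top,
      one_mul]
  calc (∫⁻ y in L.toSet, (‖f y - ⨍ z in L.toSet, f z‖₊ : ℝ≥0∞) ^ p ∂volume)
      ≤ m⁻¹ * ∫⁻ y in L.toSet, ∫⁻ z in L.toSet, (‖f y - f z‖₊ : ℝ≥0∞) ^ p ∂volume ∂volume := hC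
    _ ≤ m⁻¹ * ∫⁻ y in L.toSet, ENNReal.ofReal (L.side ^ s) *
          ∫⁻ z in L.toSet, (‖f y - f z‖₊ : ℝ≥0∞) ^ p / edist y z ^ s ∂volume ∂volume := by
        refine mul_le_mul_right ?_ _
        refine lintegral_mono_ae ?_
        filter_upwards [ae_restrict_mem (measurableSet_closedBall :
          MeasurableSet L.toSet)] with y hy using hD y hy
    _ = m⁻¹ * (ENNReal.ofReal (L.side ^ s) *
          ∫⁻ y in L.toSet, ∫⁻ z in L.toSet,
            (‖f y - f z‖₊ : ℝ≥0∞) ^ p / edist y z ^ s ∂volume ∂volume) := by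
        rw [lintegral_const_mul' _ _ ENNReal.ofReal_ne_top]
    _ = ENNReal.ofReal (L.side ^ (σ * p)) *
          ∫⁻ y in L.toSet, ∫⁻ z in L.toSet,
            (‖f y - f z‖₊ : ℝ≥0∞) ^ p / edist y z ^ s ∂volume ∂volume := by
        rw [← mul_assoc, hcancel]

lemma sum_over_Q {Ω : Set (Fin d → ℝ)} (W : WhitneyCovering d Ω) (L : Cube d)
    {s : ℝ} (hs : (d:ℝ) < s) :
    ∑' Q : {Q : Cube d // Q ∈ W.cubes},
        ENNReal.ofReal ((Q : Cube d).side ^ (d : ℝ)) /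
          ENNReal.ofReal (longDist (Q : Cube d) L ^ s) ≤
      ENNReal.ofReal (2 ^ s) * (ENNReal.ofReal (L.side ^ ((d:ℝ) - s)) * Kc d s) := by
  have hside := L.side_pos
  have hs0 : (0:ℝ) < s := lt_of_le_of_lt (Nat.cast_nonneg d) hs
  have hterm : ∀ Q : {Q : Cube d // Q ∈ W.cubes},
      ENNReal.ofReal ((Q : Cube d).side ^ (d : ℝ)) /
          ENNReal.ofReal (longDist (Q : Cube d) L ^ s) ≤
        ENNReal.ofReal (2 ^ s) * ∫⁻ x in (Q : Cube d).toSet,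
          ENNReal.ofReal ((L.side + dist x L.center) ^ (-s)) ∂volume := by
    intro Q
    have hD : 0 < longDist (Q : Cube d) L := longDist_pos _ _
    have h2s : (0:ℝ) < 2 ^ s := Real.rpow_pos_of_pos two_pos s
    have h1 : ENNReal.ofReal ((Q : Cube d).side ^ (d:ℝ)) /
        ENNReal.ofReal (longDist (Q : Cube d) L ^ s) =
        volume (Q : Cube d).toSet *
          ENNReal.ofReal ((2 * longDist (Q : Cube d) L) ^ (-s)) * ENNReal.ofReal (2 ^ s) := by
      have hreal : (2 * longDist (Q : Cube d) L) ^ (-s) * 2 ^ s =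
          (longDist (Q : Cube d) L ^ s)⁻¹ := by
        rw [Real.mul_rpow (by norm_num : (0:ℝ) ≤ 2) hD.le,
          Real.rpow_neg (by norm_num : (0:ℝ) ≤ 2), Real.rpow_neg hD.le]
        field_simp
      rw [cube_vol, div_eq_mul_inv, mul_assoc,
        ← ENNReal.ofReal_mul (Real.rpow_nonneg (mul_nonneg (by norm_num) hD.le) _), hreal,
        ENNReal.ofReal_inv_of_pos (Real.rpow_pos_of_pos hD s)]
    have h2 : volume (Q : Cube d).toSet *
        ENNReal.ofReal ((2 * longDist (Q : Cube d) L) ^ (-s)) ≤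
        ∫⁻ x in (Q : Cube d).toSet,
          ENNReal.ofReal ((L.side + dist x L.center) ^ (-s)) ∂volume := by
      have hpt : ∀ x ∈ (Q : Cube d).toSet,
          ENNReal.ofReal ((2 * longDist (Q : Cube d) L) ^ (-s)) ≤
            ENNReal.ofReal ((L.side + dist x L.center) ^ (-s)) := by
        intro x hx
        apply ENNReal.ofReal_le_ofReal
        have hdn : (0:ℝ) ≤ dist x L.center := dist_nonneg
        refine Real.rpow_le_rpow_of_nonpos (by linarith) (dist_center_le hx)
          (by linarith)
      calc volume (Q : Cube d).toSet *
            ENNReal.ofReal ((2 * longDist (Q : Cube d) L) ^ (-s))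
          = ∫⁻ _x in (Q : Cube d).toSet,
              ENNReal.ofReal ((2 * longDist (Q : Cube d) L) ^ (-s)) ∂volume := by
            rw [setLIntegral_const, mul_comm]
        _ ≤ ∫⁻ x in (Q : Cube d).toSet,
              ENNReal.ofReal ((L.side + dist x L.center) ^ (-s)) ∂volume := by
            refine lintegral_mono_ae ?_
            filter_upwards [ae_restrict_mem (measurableSet_closedBall :
              MeasurableSet (Q : Cube d).toSet)] with x hx using hpt x hx
    calc ENNReal.ofReal ((Q : Cube d).side ^ (d:ℝ)) /
          ENNReal.ofReal (longDist (Q : Cube d) L ^ s)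
        = volume (Q : Cube d).toSet *
            ENNReal.ofReal ((2 * longDist (Q : Cube d) L) ^ (-s)) *
            ENNReal.ofReal (2 ^ s) := h1
      _ ≤ (∫⁻ x in (Q : Cube d).toSet,
            ENNReal.ofReal ((L.side + dist x L.center) ^ (-s)) ∂volume) *
            ENNReal.ofReal (2 ^ s) := mul_le_mul_left h2 _
      _ = ENNReal.ofReal (2 ^ s) * ∫⁻ x in (Q : Cube d).toSet,
            ENNReal.ofReal ((L.side + dist x L.center) ^ (-s)) ∂volume := mul_comm _ _
  calc ∑' Q : {Q : Cube d // Q ∈ W.cubes},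
        ENNReal.ofReal ((Q : Cube d).side ^ (d : ℝ)) /
          ENNReal.ofReal (longDist (Q : Cube d) L ^ s)
      ≤ ∑' Q : {Q : Cube d // Q ∈ W.cubes},
          ENNReal.ofReal (2 ^ s) * ∫⁻ x in (Q : Cube d).toSet,
            ENNReal.ofReal ((L.side + dist x L.center) ^ (-s)) ∂volume :=
        ENNReal.tsum_le_tsum hterm
    _ = ENNReal.ofReal (2 ^ s) * ∑' Q : {Q : Cube d // Q ∈ W.cubes},
          ∫⁻ x in (Q : Cube d).toSet,
            ENNReal.ofReal ((L.side + dist x L.center) ^ (-s)) ∂volume :=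
        ENNReal.tsum_mul_left
    _ ≤ ENNReal.ofReal (2 ^ s) *
          ∫⁻ x : Fin d → ℝ, ENNReal.ofReal ((L.side + dist x L.center) ^ (-s)) := by
        refine mul_le_mul_right ?_ _
        have h := tsum_setLIntegral_le W
          (fun x => ENNReal.ofReal ((L.side + dist x L.center) ^ (-s)))
          (U := Set.univ) (Set.subset_univ _)
        rwa [Measure.restrict_univ] at h
    _ = ENNReal.ofReal (2 ^ s) * (ENNReal.ofReal (L.side ^ ((d:ℝ) - s)) * Kc d s) := by
        rw [lintegral_g hside L.center]

end Stmt12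

/-- case `p = q` of the control of nonlocal sums: for a uniform domain `Ω`
with Whitney covering `W`, `0 < σ < 1`, `1 ≤ p < ∞` and `f ∈ L¹_loc(Ω)`,
`Σ_{Q∈W} Σ_{L∈W} ∫_L |f − f_L|^p / D(Q,L)^{σp+d} · ℓ(Q)^d ≤ C ‖f‖^p_{Ȧ^σ_{p,p}(Ω)}`. -/
theorem stmt_12 (d : ℕ) (hd : 1 ≤ d) (σ p ε : ℝ) (hσ0 : 0 < σ) (hσ1 : σ < 1)
    (hp : 1 ≤ p) (hε : 0 < ε) :
    ∃ C : ℝ≥0∞, C ≠ ⊤ ∧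
      ∀ (Ω : Set (Fin d → ℝ)), IsOpen Ω → IsConnected Ω → Ω ≠ Set.univ →
      ∀ (W : WhitneyCovering d Ω), IsUniformDomain W ε →
      ∀ f : (Fin d → ℝ) → ℝ, MeasureTheory.LocallyIntegrableOn f Ω volume →
      (∑' Q : {Q : Cube d // Q ∈ W.cubes}, ∑' L : {L : Cube d // L ∈ W.cubes},
          (∫⁻ y in (L : Cube d).toSet,
              (‖f y - ⨍ z in (L : Cube d).toSet, f z‖₊ : ℝ≥0∞) ^ p /
                ENNReal.ofReal (longDist (Q : Cube d) (L : Cube d) ^ (σ * p + d))) *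
            ENNReal.ofReal ((Q : Cube d).side ^ (d : ℝ))) ≤
        C * ∫⁻ x in Ω, ∫⁻ y in Ω,
            (‖f x - f y‖₊ : ℝ≥0∞) ^ p / edist x y ^ (σ * p + d) := by
  have hp0 : (0:ℝ) < p := lt_of_lt_of_le zero_lt_one hp
  have hσp : 0 < σ * p := mul_pos hσ0 hp0
  have hs : (d:ℝ) < σ * p + d := by linarith
  refine ⟨ENNReal.ofReal (2 ^ (σ * p + d)) * Stmt12.Kc d (σ * p + d),
    ENNReal.mul_ne_top ENNReal.ofReal_ne_top (Stmt12.Kc_ne_top hs), ?_⟩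
  intro Ω hΩopen _ _ W _ f hf
  set s : ℝ := σ * p + d with hs_def
  have hcD : ∀ Q L : {Q : Cube d // Q ∈ W.cubes},
      (ENNReal.ofReal (longDist (Q : Cube d) (L : Cube d) ^ s))⁻¹ ≠ ⊤ := fun Q L =>
    ENNReal.inv_ne_top.2
      (ENNReal.ofReal_pos.2 (Real.rpow_pos_of_pos (Stmt12.longDist_pos _ _) s)).ne'
  have hrw : ∀ Q L : {Q : Cube d // Q ∈ W.cubes},
      (∫⁻ y in (L : Cube d).toSet,
          (‖f y - ⨍ z in (L : Cube d).toSet, f z‖₊ : ℝ≥0∞) ^ p /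
            ENNReal.ofReal (longDist (Q : Cube d) (L : Cube d) ^ s) ∂volume) =
        (∫⁻ y in (L : Cube d).toSet,
            (‖f y - ⨍ z in (L : Cube d).toSet, f z‖₊ : ℝ≥0∞) ^ p ∂volume) *
          (ENNReal.ofReal (longDist (Q : Cube d) (L : Cube d) ^ s))⁻¹ := by
    intro Q L
    simp_rw [div_eq_mul_inv]
    exact lintegral_mul_const' _ _ (hcD Q L)
  have hperL : ∀ L : {Q : Cube d // Q ∈ W.cubes},
      (∫⁻ y in (L : Cube d).toSet,
          (‖f y - ⨍ z in (L : Cube d).toSet, f z‖₊ : ℝ≥0∞) ^ p ∂volume) *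
        (∑' Q : {Q : Cube d // Q ∈ W.cubes},
          ENNReal.ofReal ((Q : Cube d).side ^ (d : ℝ)) /
            ENNReal.ofReal (longDist (Q : Cube d) (L : Cube d) ^ s)) ≤
      (ENNReal.ofReal (2 ^ s) * Stmt12.Kc d s) *
        ∫⁻ y in (L : Cube d).toSet, ∫⁻ z in (L : Cube d).toSet,
          (‖f y - f z‖₊ : ℝ≥0∞) ^ p / edist y z ^ s ∂volume ∂volume := by
    intro L
    have hfL : IntegrableOn f (L : Cube d).toSet volume :=
      hf.integrableOn_compact_subset (Stmt12.cube_subset_omega W L.2)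
        (isCompact_closedBall _ _)
    have h2 := Stmt12.local_est hfL hσ0 hp
    have h1 := Stmt12.sum_over_Q W (L : Cube d) hs
    have hσcancel : ENNReal.ofReal ((L : Cube d).side ^ (σ * p)) *
        ENNReal.ofReal ((L : Cube d).side ^ ((d:ℝ) - s)) = 1 := by
      rw [← ENNReal.ofReal_mul (Real.rpow_nonneg (L : Cube d).side_pos.le _),
        ← Real.rpow_add (L : Cube d).side_pos]
      have hexp : σ * p + ((d:ℝ) - s) = 0 := by rw [hs_def]; ring
      rw [hexp, Real.rpow_zero, ENNReal.ofReal_one]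
    calc (∫⁻ y in (L : Cube d).toSet,
            (‖f y - ⨍ z in (L : Cube d).toSet, f z‖₊ : ℝ≥0∞) ^ p ∂volume) *
          (∑' Q : {Q : Cube d // Q ∈ W.cubes},
            ENNReal.ofReal ((Q : Cube d).side ^ (d : ℝ)) /
              ENNReal.ofReal (longDist (Q : Cube d) (L : Cube d) ^ s))
        ≤ (ENNReal.ofReal ((L : Cube d).side ^ (σ * p)) *
            ∫⁻ y in (L : Cube d).toSet, ∫⁻ z in (L : Cube d).toSet,
              (‖f y - f z‖₊ : ℝ≥0∞) ^ p / edist y z ^ s ∂volume ∂volume) *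
          (ENNReal.ofReal (2 ^ s) *
            (ENNReal.ofReal ((L : Cube d).side ^ ((d:ℝ) - s)) * Stmt12.Kc d s)) :=
          mul_le_mul' h2 h1
      _ = (ENNReal.ofReal (2 ^ s) * Stmt12.Kc d s) *
            (∫⁻ y in (L : Cube d).toSet, ∫⁻ z in (L : Cube d).toSet,
              (‖f y - f z‖₊ : ℝ≥0∞) ^ p / edist y z ^ s ∂volume ∂volume) *
            (ENNReal.ofReal ((L : Cube d).side ^ (σ * p)) *
              ENNReal.ofReal ((L : Cube d).side ^ ((d:ℝ) - s))) := by ring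
      _ = (ENNReal.ofReal (2 ^ s) * Stmt12.Kc d s) *
            ∫⁻ y in (L : Cube d).toSet, ∫⁻ z in (L : Cube d).toSet,
              (‖f y - f z‖₊ : ℝ≥0∞) ^ p / edist y z ^ s ∂volume ∂volume := by
          rw [hσcancel, mul_one]
  have htail : (∑' L : {Q : Cube d // Q ∈ W.cubes},
      ∫⁻ y in (L : Cube d).toSet, ∫⁻ z in (L : Cube d).toSet,
        (‖f y - f z‖₊ : ℝ≥0∞) ^ p / edist y z ^ s ∂volume ∂volume) ≤
      ∫⁻ x in Ω, ∫⁻ z in Ω, (‖f x - f z‖₊ : ℝ≥0∞) ^ p / edist x z ^ s ∂volume ∂volume := by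
    have h1 : ∀ L : {Q : Cube d // Q ∈ W.cubes},
        (∫⁻ y in (L : Cube d).toSet, ∫⁻ z in (L : Cube d).toSet,
          (‖f y - f z‖₊ : ℝ≥0∞) ^ p / edist y z ^ s ∂volume ∂volume) ≤
        ∫⁻ y in (L : Cube d).toSet, ∫⁻ z in Ω,
          (‖f y - f z‖₊ : ℝ≥0∞) ^ p / edist y z ^ s ∂volume ∂volume :=
      fun L => lintegral_mono fun y => lintegral_mono_set (Stmt12.cube_subset_omega W L.2)
    exact le_trans (ENNReal.tsum_le_tsum h1)
      (Stmt12.tsum_setLIntegral_le W _ subset_rfl)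
  calc (∑' Q : {Q : Cube d // Q ∈ W.cubes}, ∑' L : {L : Cube d // L ∈ W.cubes},
        (∫⁻ y in (L : Cube d).toSet,
            (‖f y - ⨍ z in (L : Cube d).toSet, f z‖₊ : ℝ≥0∞) ^ p /
              ENNReal.ofReal (longDist (Q : Cube d) (L : Cube d) ^ s)) *
          ENNReal.ofReal ((Q : Cube d).side ^ (d : ℝ)))
      = ∑' Q : {Q : Cube d // Q ∈ W.cubes}, ∑' L : {L : Cube d // L ∈ W.cubes},
          ((∫⁻ y in (L : Cube d).toSet,
              (‖f y - ⨍ z in (L : Cube d).toSet, f z‖₊ : ℝ≥0∞) ^ p ∂volume) *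
            (ENNReal.ofReal (longDist (Q : Cube d) (L : Cube d) ^ s))⁻¹) *
          ENNReal.ofReal ((Q : Cube d).side ^ (d : ℝ)) := by
        refine tsum_congr fun Q => tsum_congr fun L => ?_
        rw [hrw Q L]
    _ = ∑' L : {L : Cube d // L ∈ W.cubes}, ∑' Q : {Q : Cube d // Q ∈ W.cubes},
          ((∫⁻ y in (L : Cube d).toSet,
              (‖f y - ⨍ z in (L : Cube d).toSet, f z‖₊ : ℝ≥0∞) ^ p ∂volume) *
            (ENNReal.ofReal (longDist (Q : Cube d) (L : Cube d) ^ s))⁻¹) *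
          ENNReal.ofReal ((Q : Cube d).side ^ (d : ℝ)) := ENNReal.tsum_comm
    _ = ∑' L : {L : Cube d // L ∈ W.cubes},
          (∫⁻ y in (L : Cube d).toSet,
              (‖f y - ⨍ z in (L : Cube d).toSet, f z‖₊ : ℝ≥0∞) ^ p ∂volume) *
            (∑' Q : {Q : Cube d // Q ∈ W.cubes},
              ENNReal.ofReal ((Q : Cube d).side ^ (d : ℝ)) /
                ENNReal.ofReal (longDist (Q : Cube d) (L : Cube d) ^ s)) := by
        refine tsum_congr fun L => ?_
        rw [← ENNReal.tsum_mul_left]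
        refine tsum_congr fun Q => ?_
        rw [div_eq_mul_inv]
        ring
    _ ≤ ∑' L : {L : Cube d // L ∈ W.cubes},
          (ENNReal.ofReal (2 ^ s) * Stmt12.Kc d s) *
            ∫⁻ y in (L : Cube d).toSet, ∫⁻ z in (L : Cube d).toSet,
              (‖f y - f z‖₊ : ℝ≥0∞) ^ p / edist y z ^ s ∂volume ∂volume :=
        ENNReal.tsum_le_tsum hperL
    _ = (ENNReal.ofReal (2 ^ s) * Stmt12.Kc d s) *
          ∑' L : {L : Cube d // L ∈ W.cubes},
            ∫⁻ y in (L : Cube d).toSet, ∫⁻ z in (L : Cube d).toSet,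
              (‖f y - f z‖₊ : ℝ≥0∞) ^ p / edist y z ^ s ∂volume ∂volume :=
        ENNReal.tsum_mul_left
    _ ≤ (ENNReal.ofReal (2 ^ s) * Stmt12.Kc d s) *
          ∫⁻ x in Ω, ∫⁻ y in Ω,
            (‖f x - f y‖₊ : ℝ≥0∞) ^ p / edist x y ^ s ∂volume ∂volume :=
        mul_le_mul_right htail _
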